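/- Let T be an (S,R)-bimodule and T' an (S',R)-bimodule. Suppose there exist an invertible (S,S')-bimodule P and an invertible (S',S)-bimodule Q with T ≅ P ⊗_{S'} T' and T' ≅ Q ⊗_S T as right R-modules. Then Prod(T_R) = Prod(T'_R), where Prod(M) denotes the class of right R-modules isomorphic to a direct summand of a direct product of copies of M. -/

import Mathlib

noncomputable section
open CategoryTheory

universe u

/-- Right multiplication by `r : R` on an `(S,R)`-bimodule, as an `S`-linear map. -/
def rAct (R : Type u) {S M : Type u} [Ring R] [Ring S] [AddCommGroup M] [Module S M]
    [Module Rᵐᵒᵖ M] [SMulCommClass S Rᵐᵒᵖ M] (r : R) : M →ₗ[S] M where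
  toFun x := MulOpposite.op r • x
  map_add' := smul_add _
  map_smul' s x := (smul_comm s (MulOpposite.op r) x).symm

/-- There is an invertible `(S,S')`-bimodule `P` with `T ≅ P ⊗_{S'} T'` as right `R`-modules;
formulated (Eilenberg–Watts) as: there is an equivalence `e : S'-Mod ≌ S-Mod` together with an
additive isomorphism `e(T') ≅ T` intertwining the right `R`-actions. -/
def TwistedBy (R : Type u) [Ring R] (S : Type u) [Ring S] (T : Type u) [AddCommGroup T]
    [Module S T] [Module Rᵐᵒᵖ T] [SMulCommClass S Rᵐᵒᵖ T]
    (S' : Type u) [Ring S'] (T' : Type u) [AddCommGroup T'] [Module S' T']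
    [Module Rᵐᵒᵖ T'] [SMulCommClass S' Rᵐᵒᵖ T'] : Prop :=
  ∃ e : ModuleCat.{u} S' ≌ ModuleCat.{u} S,
    ∃ ψ : (e.functor.obj (ModuleCat.of S' T')) ≃+ T,
      ∀ (r : R) (x : e.functor.obj (ModuleCat.of S' T')),
        ψ (e.functor.map (ModuleCat.ofHom (rAct R r)) x) = MulOpposite.op r • ψ x

/-- `M` is a direct summand of a direct product of copies of `T` (as `A`-modules). -/
def InProd (A : Type u) [Ring A] (T : Type u) [AddCommGroup T] [Module A T]
    (M : Type u) [AddCommGroup M] [Module A M] : Prop :=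
  ∃ (I : Type u) (ι : M →ₗ[A] (I → T)) (π : (I → T) →ₗ[A] M), π ∘ₗ ι = LinearMap.id

/-- Coerce a linear map between the carriers of two bundled modules to a morphism. -/
private def homOf {R : Type u} [Ring R] {A B : ModuleCat.{u} R} (f : ↥A →ₗ[R] ↥B) : A ⟶ B := ModuleCat.ofHom (X := A) (Y := B) f

private lemma inProd_trans {A T T' X : Type u} [Ring A] [AddCommGroup T] [Module A T]
    [AddCommGroup T'] [Module A T'] [AddCommGroup X] [Module A X]
    (h1 : InProd A T X) (h2 : InProd A T' T) : InProd A T' X := by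
  obtain ⟨I, ι1, π1, hc1⟩ := h1
  obtain ⟨J, ι2, π2, hc2⟩ := h2
  have h2' : ∀ t, π2 (ι2 t) = t := fun t => LinearMap.congr_fun hc2 t
  have h1' : ∀ x, π1 (ι1 x) = x := fun x => LinearMap.congr_fun hc1 x
  refine ⟨I × J,
    { toFun := fun x p => ι2 (ι1 x p.1) p.2
      map_add' := fun x y => by funext p; simp [map_add]
      map_smul' := fun c x => by funext p; simp [map_smul] },
    { toFun := fun g => π1 (fun i => π2 (fun j => g (i, j)))
      map_add' := fun g g' => by
        have h3 : (fun i => π2 (fun j => (g + g') (i, j)))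
            = (fun i => π2 (fun j => g (i, j))) + (fun i => π2 (fun j => g' (i, j))) := by
          funext i
          show π2 ((fun j => g (i, j)) + fun j => g' (i, j)) = _
          rw [map_add]; rfl
        simp only [h3, map_add]
      map_smul' := fun c g => by
        have h3 : (fun i => π2 (fun j => (c • g) (i, j)))
            = c • fun i => π2 (fun j => g (i, j)) := by
          funext i
          show π2 (c • fun j => g (i, j)) = _
          rw [map_smul]; rfl
        simp only [h3, map_smul, RingHom.id_apply] }, ?_⟩
  ext x
  show π1 (fun i => π2 (fun j => ι2 (ι1 x i) j)) = x
  have h3 : (fun i => π2 (fun j => ι2 (ι1 x i) j)) = fun i => ι1 x i := by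
    funext i; exact h2' (ι1 x i)
  rw [h3, h1' x]

private lemma inProd_of_twistedBy (R : Type u) [Ring R]
    (S : Type u) [Ring S] (T : Type u) [AddCommGroup T] [Module S T] [Module Rᵐᵒᵖ T]
    [SMulCommClass S Rᵐᵒᵖ T]
    (S' : Type u) [Ring S'] (T' : Type u) [AddCommGroup T'] [Module S' T']
    [Module Rᵐᵒᵖ T'] [SMulCommClass S' Rᵐᵒᵖ T']
    (h : TwistedBy R S T S' T') : InProd Rᵐᵒᵖ T' T := by
  classical
  letI : SMul Rᵐᵒᵖ ↥(ModuleCat.of S' T') := inferInstanceAs (SMul Rᵐᵒᵖ T')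
  obtain ⟨e, ψ, hψ⟩ := h
  haveI : e.functor.Additive := Functor.additive_of_preserves_binary_products _
  set Ss : ModuleCat.{u} S := ModuleCat.of S S with hSsdef
  set Q : ModuleCat.{u} S' := e.inverse.obj Ss with hQdef
  -- projectivity of Q
  have hprojS : Projective Ss := (IsProjective.iff_projective S).mp inferInstance
  have hprojQ : Projective Q := (e.symm.map_projective_iff Ss).mpr hprojS
  have hQproj : Module.Projective S' ↥Q :=
    (IsProjective.iff_projective ↥Q).mpr (Projective.of_iso (Iso.refl Q : Q ≅ ModuleCat.of S' ↥Q) hprojQ)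
  obtain ⟨s, hs⟩ := Module.projective_def.mp hQproj
  -- the "evaluation point"
  set z : ↥(e.functor.obj Q) := e.counitInv.app Ss (1 : S) with hzdef
  -- θ : elements of e(T') as morphisms Q ⟶ T'
  set toL : ↥(e.functor.obj (ModuleCat.of S' T')) → (Ss ⟶ e.functor.obj (ModuleCat.of S' T')) :=
    fun y => homOf (LinearMap.toSpanSingleton S ↥(e.functor.obj (ModuleCat.of S' T')) y)
    with htoL
  set θ : ↥(e.functor.obj (ModuleCat.of S' T')) → (Q ⟶ ModuleCat.of S' T') :=
    fun y => e.inverse.map (toL y) ≫ e.unitInv.app (ModuleCat.of S' T') with hθ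
  have key : ∀ (L : Ss ⟶ e.functor.obj (ModuleCat.of S' T')),
      e.functor.map (e.inverse.map L ≫ e.unitInv.app (ModuleCat.of S' T')) z = L (1 : S) := by
    intro L
    have hm : e.counitInv.app Ss
        ≫ e.functor.map (e.inverse.map L ≫ e.unitInv.app (ModuleCat.of S' T')) = L := by
      have hnat : e.counitInv.app Ss ≫ e.functor.map (e.inverse.map L)
          = L ≫ e.counitInv.app (e.functor.obj (ModuleCat.of S' T')) :=
        (e.counitInv.naturality L).symm
      rw [e.functor.map_comp, ← Category.assoc, hnat, Category.assoc,
        e.counitInv_functor_comp, Category.comp_id]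
    exact congrArg (fun f : Ss ⟶ e.functor.obj (ModuleCat.of S' T') => f.hom (1 : S)) hm
  have θsec : ∀ y, e.functor.map (θ y) z = y := by
    intro y
    exact (key (toL y)).trans (one_smul S y)
  -- additivity of θ
  have θadd : ∀ y y', θ (y + y') = θ y + θ y' := by
    intro y y'
    have hL : toL (y + y') = toL y + toL y' := by
      apply ModuleCat.hom_ext; apply LinearMap.ext; intro c
      exact smul_add (show S from c) y y'
    have h9 : e.inverse.map (toL y + toL y')
        = e.inverse.map (toL y) + e.inverse.map (toL y') := e.inverse.map_add
    apply ModuleCat.hom_ext; apply LinearMap.ext; intro x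
    show e.unitInv.app (ModuleCat.of S' T') (e.inverse.map (toL (y + y')) x)
      = e.unitInv.app (ModuleCat.of S' T') (e.inverse.map (toL y) x)
        + e.unitInv.app (ModuleCat.of S' T') (e.inverse.map (toL y') x)
    rw [hL, h9]
    show e.unitInv.app (ModuleCat.of S' T')
        (e.inverse.map (toL y) x + e.inverse.map (toL y') x) = _
    exact map_add (e.unitInv.app (ModuleCat.of S' T')).hom _ _
  -- compatibility of θ with the right R-action
  have θr : ∀ (r : R) (y : ↥(e.functor.obj (ModuleCat.of S' T'))),
      θ (e.functor.map (ModuleCat.ofHom (rAct R r)) y)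
        = θ y ≫ ModuleCat.ofHom (rAct (M := T') R r) := by
    intro r y
    have h3 : toL (e.functor.map (ModuleCat.ofHom (rAct (M := T') R r)) y)
        = toL y ≫ e.functor.map (ModuleCat.ofHom (rAct (M := T') R r)) := by
      apply ModuleCat.hom_ext; apply LinearMap.ext; intro c
      exact (map_smul (e.functor.map (ModuleCat.ofHom (rAct (M := T') R r))).hom (show S from c) y).symm
    have h4 : e.inverse.map (e.functor.map (ModuleCat.ofHom (rAct (M := T') R r)))
          ≫ e.unitInv.app (ModuleCat.of S' T')
        = e.unitInv.app (ModuleCat.of S' T') ≫ ModuleCat.ofHom (rAct (M := T') R r) :=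
      e.unitInv.naturality (ModuleCat.ofHom (rAct (M := T') R r))
    simp only [hθ, h3, e.inverse.map_comp, Category.assoc, h4]
  -- the two maps
  set ι0 : T → (↥Q → T') := fun t q => (θ (ψ.symm t) q : T') with hι0
  set π0 : (↥Q → T') → T := fun g =>
    ψ (e.functor.map (homOf (B := ModuleCat.of S' T')
      ((Finsupp.linearCombination S' g) ∘ₗ s)) z) with hπ0
  -- section property
  have hsec : ∀ t, π0 (ι0 t) = t := by
    intro t
    have hcomp : homOf (B := ModuleCat.of S' T') ((Finsupp.linearCombination S' (ι0 t)) ∘ₗ s)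
        = θ (ψ.symm t) := by
      apply ModuleCat.hom_ext; apply LinearMap.ext; intro x
      have h7 := Finsupp.apply_linearCombination_id S'
        (θ (ψ.symm t)).hom (s x)
      rw [hs x] at h7
      exact h7.symm
    simp only [hπ0]
    rw [hcomp, θsec (ψ.symm t), ψ.apply_symm_apply]
  -- additivity of ι0
  have ιadd : ∀ t t', ι0 (t + t') = ι0 t + ι0 t' := by
    intro t t'
    funext q
    show θ (ψ.symm (t + t')) q = θ (ψ.symm t) q + θ (ψ.symm t') q
    rw [map_add ψ.symm t t', θadd]
    rfl
  -- R-compatibility of ι0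
  have ιsmul : ∀ (r : R) (t : T), ι0 (MulOpposite.op r • t) = MulOpposite.op r • ι0 t := by
    intro r t
    have hsymm : ψ.symm (MulOpposite.op r • t)
        = e.functor.map (ModuleCat.ofHom (rAct R r)) (ψ.symm t) := by
      apply ψ.injective
      rw [ψ.apply_symm_apply, hψ r (ψ.symm t), ψ.apply_symm_apply]
    funext q
    show θ (ψ.symm (MulOpposite.op r • t)) q = MulOpposite.op r • θ (ψ.symm t) q
    rw [hsymm, θr r (ψ.symm t)]
    rfl
  -- additivity of π0
  have πadd : ∀ g g', π0 (g + g') = π0 g + π0 g' := by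
    intro g g'
    have hlc : (Finsupp.linearCombination S' (g + g')) ∘ₗ s
        = (Finsupp.linearCombination S' g) ∘ₗ s + (Finsupp.linearCombination S' g') ∘ₗ s := by
      rw [← LinearMap.add_comp]
      congr 1
      apply Finsupp.lhom_ext; intro q c
      simp only [Finsupp.linearCombination_single, LinearMap.add_apply, Pi.add_apply, smul_add]
    simp only [hπ0]
    rw [hlc]
    show ψ (e.functor.map (homOf (B := ModuleCat.of S' T')
        ((Finsupp.linearCombination S' g) ∘ₗ s)
      + homOf (B := ModuleCat.of S' T') ((Finsupp.linearCombination S' g') ∘ₗ s)) z) = _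
    rw [e.functor.map_add]
    show ψ (e.functor.map (homOf (B := ModuleCat.of S' T')
        ((Finsupp.linearCombination S' g) ∘ₗ s)) z
      + e.functor.map (homOf (B := ModuleCat.of S' T')
        ((Finsupp.linearCombination S' g') ∘ₗ s)) z) = _
    rw [map_add]
  -- R-compatibility of π0
  have πsmul : ∀ (r : R) (g : ↥Q → T'),
      π0 (MulOpposite.op r • g) = MulOpposite.op r • π0 g := by
    intro r g
    have hlc : (Finsupp.linearCombination S' (MulOpposite.op r • g)) ∘ₗ s
        = (rAct (M := T') R r) ∘ₗ ((Finsupp.linearCombination S' g) ∘ₗ s) := by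
      rw [← LinearMap.comp_assoc]
      congr 1
      apply Finsupp.lhom_ext; intro q c
      simp only [Finsupp.linearCombination_single, LinearMap.comp_apply, Pi.smul_apply]
      show c • MulOpposite.op r • g q = rAct (M := T') R r (c • g q)
      show c • MulOpposite.op r • g q = MulOpposite.op r • c • g q
      exact smul_comm c (MulOpposite.op r) (g q)
    simp only [hπ0]
    rw [hlc]
    show ψ (e.functor.map (homOf (B := ModuleCat.of S' T')
        ((Finsupp.linearCombination S' g) ∘ₗ s) ≫ ModuleCat.ofHom (rAct (M := T') R r)) z) = _
    rw [e.functor.map_comp]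
    show ψ (e.functor.map (ModuleCat.ofHom (rAct R r))
        (e.functor.map (homOf (B := ModuleCat.of S' T')
          ((Finsupp.linearCombination S' g) ∘ₗ s)) z)) = _
    rw [hψ]
  -- assemble
  refine ⟨↥Q,
    { toFun := ι0
      map_add' := ιadd
      map_smul' := fun c t => by
        have h8 := ιsmul c.unop t
        rwa [MulOpposite.op_unop] at h8 },
    { toFun := π0
      map_add' := πadd
      map_smul' := fun c g => by
        have h8 := πsmul c.unop g
        rwa [MulOpposite.op_unop] at h8 }, ?_⟩
  ext t
  exact hsec t

/-- if `T` is an `(S,R)`-bimodule and `T'` an `(S',R)`-bimodule with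
`T ≅ P ⊗_{S'} T'` and `T' ≅ Q ⊗_S T` as right `R`-modules for some invertible bimodules
`P`, `Q`, then `Prod(T_R) = Prod(T'_R)`. -/
theorem prod_eq_of_sim (R : Type u) [Ring R]
    (S : Type u) [Ring S] (T : Type u) [AddCommGroup T] [Module S T] [Module Rᵐᵒᵖ T]
    [SMulCommClass S Rᵐᵒᵖ T]
    (S' : Type u) [Ring S'] (T' : Type u) [AddCommGroup T'] [Module S' T']
    [Module Rᵐᵒᵖ T'] [SMulCommClass S' Rᵐᵒᵖ T']
    (h₁ : TwistedBy R S T S' T') (h₂ : TwistedBy R S' T' S T)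
    (X : Type u) [AddCommGroup X] [Module Rᵐᵒᵖ X] :
    InProd Rᵐᵒᵖ T X ↔ InProd Rᵐᵒᵖ T' X := by
  constructor
  · intro h
    exact inProd_trans h (inProd_of_twistedBy R S T S' T' h₁)
  · intro h
    exact inProd_trans h (inProd_of_twistedBy R S' T' S T h₂)

end
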